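/- Consider the partial action of the discrete group ℤ on X = [0,1] given by m_0 = id_X and m_n = id_V for n ≠ 0, where V = (0,1]. Then the enveloping action μ of ℤ on the enveloping space X_ℤ, given by μ_m[(n,x)] = [(n+m,x)], is not continuous at the point [(0,0)] with respect to the Polish topology τ of the standard Borel globalization (in which X_ℤ is Borel isomorphic to T = ({0} × [0,1]) ∪ (ℤ × {0})): μ_1[(0,x)] = [(0,x)] for x > 0 but μ_1[(0,0)] = [(1,0)]. -/

import Mathlib

structure PartialAction (G : Type*) (X : Type*) [Group G] where
  dom : G → Set X
  act : G → X → X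
  mem_dom_one : ∀ x, x ∈ dom 1
  act_one : ∀ x, act 1 x = x
  mem_dom_inv : ∀ g x, x ∈ dom g → act g x ∈ dom g⁻¹
  act_inv_act : ∀ g x, x ∈ dom g → act g⁻¹ (act g x) = x
  mem_dom_mul : ∀ g h x, x ∈ dom h → act h x ∈ dom g → x ∈ dom (g * h)
  act_mul : ∀ g h x, x ∈ dom h → act h x ∈ dom g → act (g * h) x = act g (act h x)

namespace PartialAction

variable {G X : Type*} [Group G]

/-- The orbit equivalence relation `E^p_G` of a partial action. -/
def orbitRel (pa : PartialAction G X) (x y : X) : Prop :=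
  ∃ g, x ∈ pa.dom g ∧ pa.act g x = y

/-- `G^x = {g : G | g · x is defined}`. -/
def stabDom (pa : PartialAction G X) (x : X) : Set G := {g | x ∈ pa.dom g}

/-- The orbit equivalence relation of the partial action `\widehat m` on `G × X`,
`\widehat m_u (h, x) = (h u⁻¹, u · x)`. -/
def hatOrbitRel (pa : PartialAction G X) (p q : G × X) : Prop :=
  ∃ u, p.2 ∈ pa.dom u ∧ q = (p.1 * u⁻¹, pa.act u p.2)

/-- Vaught transform `A^{△V}`. -/
def vaughtDelta [TopologicalSpace G] (pa : PartialAction G X) (A : Set X) (V : Set G) : Set X :=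
  {x | ¬ IsMeagre {g : ↥(V ∩ pa.stabDom x) | pa.act (g : G) x ∈ A}}

/-- Vaught transform `A^{*V}`. -/
def vaughtStar [TopologicalSpace G] (pa : PartialAction G X) (A : Set X) (V : Set G) : Set X :=
  {x | {g : ↥(V ∩ pa.stabDom x) | pa.act (g : G) x ∈ A} ∈ residual ↥(V ∩ pa.stabDom x)}

end PartialAction

/-- The partial action of `ℤ` (written multiplicatively) on `X = [0,1]` given by
`m_0 = id_X` and `m_n = id_V` for `n ≠ 0`, where `V = (0,1]`. -/
def pa17 : PartialAction (Multiplicative ℤ) unitInterval where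
  dom g := {x | g = 1 ∨ 0 < (x : ℝ)}
  act _ x := x
  mem_dom_one x := Or.inl rfl
  act_one _ := rfl
  mem_dom_inv g x h := by
    rcases h with h | h
    · exact Or.inl (by simp [h])
    · exact Or.inr h
  act_inv_act _ _ _ := rfl
  mem_dom_mul g h x hx hgx := by
    rcases hx with hx | hx
    · rcases hgx with hg | hg
      · exact Or.inl (by simp [hx, hg])
      · exact Or.inr hg
    · exact Or.inr hx
  act_mul _ _ _ _ _ := rfl

/-- The transversal `T = ({0} × [0,1]) ∪ (ℤ × {0})` of the enveloping space `X_ℤ`. -/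
def T17 : Set (Multiplicative ℤ × unitInterval) := {p | p.1 = 1 ∨ p.2 = 0}


/-- Invariant of the orbit relation distinguishing the classes of points with `x = 0`. -/
noncomputable def inv17 (p : Multiplicative ℤ × unitInterval) : Multiplicative ℤ :=
  if (p.2 : ℝ) = 0 then p.1 else 1

lemma inv17_const : ∀ p q, pa17.hatOrbitRel p q → inv17 p = inv17 q := by
  rintro ⟨g, x⟩ q ⟨u, hu, rfl⟩
  rcases hu with hu | hu
  · simp [inv17, hu, pa17]
  · have hx : (x : ℝ) ≠ 0 := ne_of_gt hu
    simp [inv17, hx, pa17]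

lemma mk17_eq (x : unitInterval) (hx : 0 < (x : ℝ)) :
    Quot.mk pa17.hatOrbitRel (Multiplicative.ofAdd 1, x) = Quot.mk pa17.hatOrbitRel (1, x) := by
  apply Quot.sound
  exact ⟨Multiplicative.ofAdd 1, Or.inr hx, by simp [pa17]⟩

lemma mk17_ne :
    Quot.mk pa17.hatOrbitRel ((Multiplicative.ofAdd 1 : Multiplicative ℤ), (0 : unitInterval))
      ≠ Quot.mk pa17.hatOrbitRel (1, 0) := by
  intro h
  have := congrArg (Quot.lift inv17 inv17_const) h
  simp only [Quot.lift_mk, inv17] at this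
  norm_num at this

/-- for the partial action of `ℤ` on `[0,1]` above, the enveloping action
`μ_m [(n,x)] = [(n+m,x)]` satisfies `μ_1 [(0,x)] = [(0,x)]` for `x > 0` but
`μ_1 [(0,0)] = [(1,0)] ≠ [(0,0)]`, and `μ_1` is not continuous at `[(0,0)]` with respect
to any Polish topology `τ` on `X_ℤ` for which the canonical bijection from the transversal
`T = ({0} × [0,1]) ∪ (ℤ × {0})` (which realizes the Borel isomorphism of the standard
Borel globalization) is a homeomorphism. -/
theorem enveloping_action_not_continuous
    (μ : Multiplicative ℤ → Quot pa17.hatOrbitRel → Quot pa17.hatOrbitRel)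
    (hμ : ∀ (u g : Multiplicative ℤ) (x : unitInterval),
      μ u (Quot.mk pa17.hatOrbitRel (g, x)) = Quot.mk pa17.hatOrbitRel (u * g, x))
    (τ : TopologicalSpace (Quot pa17.hatOrbitRel))
    (e : @Homeomorph (↥T17) (Quot pa17.hatOrbitRel) _ τ)
    (he : ∀ p : ↥T17, e p = Quot.mk pa17.hatOrbitRel (p : Multiplicative ℤ × unitInterval)) :
    (∀ x : unitInterval, 0 < (x : ℝ) →
      μ (Multiplicative.ofAdd 1) (Quot.mk pa17.hatOrbitRel (1, x))
        = Quot.mk pa17.hatOrbitRel (1, x)) ∧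
    (μ (Multiplicative.ofAdd 1) (Quot.mk pa17.hatOrbitRel (1, 0))
        = Quot.mk pa17.hatOrbitRel (Multiplicative.ofAdd 1, 0)) ∧
    (Quot.mk pa17.hatOrbitRel ((Multiplicative.ofAdd 1 : Multiplicative ℤ), (0 : unitInterval))
        ≠ Quot.mk pa17.hatOrbitRel (1, 0)) ∧
    ¬ @ContinuousAt _ _ τ τ (μ (Multiplicative.ofAdd 1))
        (Quot.mk pa17.hatOrbitRel (1, (0 : unitInterval))) := by

  have part1 : ∀ x : unitInterval, 0 < (x : ℝ) →
      μ (Multiplicative.ofAdd 1) (Quot.mk pa17.hatOrbitRel (1, x))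
        = Quot.mk pa17.hatOrbitRel (1, x) := by
    intro x hx
    rw [hμ, mul_one, mk17_eq x hx]
  have part2 : μ (Multiplicative.ofAdd 1) (Quot.mk pa17.hatOrbitRel (1, 0))
      = Quot.mk pa17.hatOrbitRel (Multiplicative.ofAdd 1, 0) := by
    rw [hμ, mul_one]
  refine ⟨part1, part2, mk17_ne, ?_⟩
  intro hcont
  -- points of the transversal
  set p0 : ↥T17 := ⟨(1, 0), Or.inl rfl⟩ with hp0
  set p1 : ↥T17 := ⟨(Multiplicative.ofAdd 1, 0), Or.inr rfl⟩ with hp1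
  set f : ↥T17 → ↥T17 := fun p => e.symm (μ (Multiplicative.ofAdd 1) (e p)) with hf
  have hfc : ContinuousAt f p0 := by
    apply e.symm.continuous.continuousAt.comp
    apply ContinuousAt.comp _ e.continuous.continuousAt
    rw [he p0]
    exact hcont
  -- the sequence (1, 1/(n+1)) in T17
  have hmem : ∀ n : ℕ, (1 / ((n : ℝ) + 1)) ∈ unitInterval := by
    intro n
    constructor
    · positivity
    · rw [div_le_one (by positivity)]
      linarith [Nat.cast_nonneg (α := ℝ) n]
  set s : ℕ → ↥T17 := fun n => ⟨(1, ⟨1 / ((n : ℝ) + 1), hmem n⟩), Or.inl rfl⟩ with hs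
  have hfs : ∀ n, f (s n) = s n := by
    intro n
    have := he (s n)
    simp only [hf, this]
    rw [part1 _ (by positivity), ← he (s n), Homeomorph.symm_apply_apply]
  have hfp0 : f p0 = p1 := by
    simp only [hf, he p0, part2, ← he p1, Homeomorph.symm_apply_apply]
    rw [Homeomorph.symm_apply_eq, he p1]
    exact part2
  have hts : Filter.Tendsto s Filter.atTop (nhds p0) := by
    rw [tendsto_subtype_rng]
    apply Filter.Tendsto.prodMk_nhds tendsto_const_nhds
    rw [tendsto_subtype_rng]
    exact tendsto_one_div_add_atTop_nhds_zero_nat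
  have hts2 : Filter.Tendsto (f ∘ s) Filter.atTop (nhds p1) := by
    rw [← hfp0]
    exact hfc.tendsto.comp hts
  have hts3 : Filter.Tendsto s Filter.atTop (nhds p1) := by
    have : f ∘ s = s := funext hfs
    rwa [this] at hts2
  have : p0 = p1 := tendsto_nhds_unique hts hts3
  have h1 : ((1 : Multiplicative ℤ), (0 : unitInterval)) = (Multiplicative.ofAdd 1, 0) :=
    congrArg Subtype.val this
  have := congrArg Prod.fst h1
  exact (by decide : (1 : Multiplicative ℤ) ≠ Multiplicative.ofAdd 1) this
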